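/- Define, for θ > 0, z̃₂(θ) = 6(sinh 2θ − 2θ)²/(cosh 2θ − 1)³, w̃₀(θ) = (sinh 2θ − 2θ)(sinh 2θ)/(cosh 2θ − 1)², z̃₄(θ) = 30(sinh 2θ − 2θ)⁴(cosh θ)²/(cosh 2θ − 1)⁶, w̃₂(θ) = 3(sinh 2θ − 2θ)³(cosh θ)/(2(cosh 2θ − 1)⁴ sinh θ), and T(θ) = (sinh 2θ − 2θ)/2. Then for all θ > 0: T(θ)·z̃₄′(θ) = (cosh 2θ − 1)·((5/12)z̃₂²w̃₀ + 4z̃₄ − 5w̃₀z̃₄ − 5z̃₂w̃₂) and T(θ)·w̃₂′(θ) = (cosh 2θ − 1)·(−(1/24)z̃₂² + (1/4)z̃₂w̃₀² − (1/10)z̃₄ + 3w̃₂ − 4w̃₀w̃₂), where all functions are evaluated at θ. Equivalently, the curve (z̃₂, w̃₀, z̃₄, w̃₂) reparametrized by τ = ln T(θ) is a solution of the order n = 2 STV ODE. -/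

import Mathlib

open Real Set Filter

/-- Leading-order density coefficient of the pressureless `k = −1` Friedmann spacetime. -/
noncomputable def z2F (θ : ℝ) : ℝ :=
  6 * (Real.sinh (2 * θ) - 2 * θ) ^ 2 / (Real.cosh (2 * θ) - 1) ^ 3

/-- Leading-order velocity coefficient. -/
noncomputable def w0F (θ : ℝ) : ℝ :=
  (Real.sinh (2 * θ) - 2 * θ) * Real.sinh (2 * θ) / (Real.cosh (2 * θ) - 1) ^ 2

/-- Second-order density coefficient. -/
noncomputable def z4F (θ : ℝ) : ℝ :=
  30 * (Real.sinh (2 * θ) - 2 * θ) ^ 4 * (Real.cosh θ) ^ 2 / (Real.cosh (2 * θ) - 1) ^ 6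

/-- Second-order velocity coefficient. -/
noncomputable def w2F (θ : ℝ) : ℝ :=
  3 * (Real.sinh (2 * θ) - 2 * θ) ^ 3 * Real.cosh θ /
    (2 * (Real.cosh (2 * θ) - 1) ^ 4 * Real.sinh θ)

/-- `T θ = (sinh 2θ − 2θ)/2`. -/
noncomputable def T (θ : ℝ) : ℝ := (Real.sinh (2 * θ) - 2 * θ) / 2

/-- The `k = −1` Friedmann curve solves the order `n = 2` STV ODE (in `τ = ln T θ`). -/
theorem k_neg_orbit_solves_STV_ODE_order_two (θ : ℝ) (hθ : 0 < θ) :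
    T θ * deriv z4F θ =
      (Real.cosh (2 * θ) - 1) *
        ((5 / 12) * (z2F θ) ^ 2 * w0F θ + 4 * z4F θ - 5 * w0F θ * z4F θ
          - 5 * z2F θ * w2F θ) ∧
    T θ * deriv w2F θ =
      (Real.cosh (2 * θ) - 1) *
        (-(1 / 24) * (z2F θ) ^ 2 + (1 / 4) * z2F θ * (w0F θ) ^ 2
          - (1 / 10) * z4F θ + 3 * w2F θ - 4 * w0F θ * w2F θ) := by
  have hs : 0 < Real.sinh θ := Real.sinh_pos_iff.2 hθ
  have hc2 : Real.cosh θ ^ 2 = Real.sinh θ ^ 2 + 1 := Real.cosh_sq θ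
  have hC2 : Real.cosh (2 * θ) = 2 * Real.sinh θ ^ 2 + 1 := by
    rw [Real.cosh_two_mul]; linarith
  have hS2 : Real.sinh (2 * θ) = 2 * Real.sinh θ * Real.cosh θ := Real.sinh_two_mul θ
  have hBpos : 0 < Real.cosh (2 * θ) - 1 := by rw [hC2]; nlinarith [hs]
  have hBne : (Real.cosh (2 * θ) - 1) ≠ 0 := ne_of_gt hBpos
  have h1 : HasDerivAt (fun x : ℝ => 2 * x) 2 θ := by
    simpa using (hasDerivAt_id θ).const_mul 2
  have hA : HasDerivAt (fun x => Real.sinh (2 * x) - 2 * x)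
      (2 * Real.cosh (2 * θ) - 2) θ := by
    have h2 : HasDerivAt (fun x => Real.sinh (2 * x)) (Real.cosh (2 * θ) * 2) θ :=
      (Real.hasDerivAt_sinh (2 * θ)).comp θ h1
    exact (h2.sub h1).congr_deriv (by ring)
  have hB : HasDerivAt (fun x => Real.cosh (2 * x) - 1) (2 * Real.sinh (2 * θ)) θ := by
    have h2 : HasDerivAt (fun x => Real.cosh (2 * x)) (Real.sinh (2 * θ) * 2) θ :=
      (Real.hasDerivAt_cosh (2 * θ)).comp θ h1
    simpa [mul_comm] using h2.sub_const 1
  have hAdef : Real.sinh (2 * θ) - 2 * θ = 2 * Real.sinh θ * Real.cosh θ - 2 * θ := by rw [hS2]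
  -- z4F derivative
  have hz4 : HasDerivAt z4F
      (((30 * (4 * (Real.sinh (2 * θ) - 2 * θ) ^ 3 * (2 * Real.cosh (2 * θ) - 2)) * Real.cosh θ ^ 2
          + 30 * (Real.sinh (2 * θ) - 2 * θ) ^ 4 * (2 * Real.cosh θ ^ 1 * Real.sinh θ)) * (Real.cosh (2 * θ) - 1) ^ 6
        - 30 * (Real.sinh (2 * θ) - 2 * θ) ^ 4 * Real.cosh θ ^ 2 * (6 * (Real.cosh (2 * θ) - 1) ^ 5 * (2 * Real.sinh (2 * θ))))
        / ((Real.cosh (2 * θ) - 1) ^ 6) ^ 2) θ := by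
    have hnum : HasDerivAt (fun x => 30 * (Real.sinh (2 * x) - 2 * x) ^ 4 * Real.cosh x ^ 2)
        (30 * (4 * (Real.sinh (2 * θ) - 2 * θ) ^ 3 * (2 * Real.cosh (2 * θ) - 2)) * Real.cosh θ ^ 2
          + 30 * (Real.sinh (2 * θ) - 2 * θ) ^ 4 * (2 * Real.cosh θ ^ 1 * Real.sinh θ)) θ := by
      have := ((hA.pow 4).const_mul 30).mul ((Real.hasDerivAt_cosh θ).pow 2)
      exact this.congr_deriv (by norm_num [Pi.pow_apply])
    have hden : HasDerivAt (fun x => (Real.cosh (2 * x) - 1) ^ 6)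
        (6 * (Real.cosh (2 * θ) - 1) ^ 5 * (2 * Real.sinh (2 * θ))) θ := by
      have := hB.pow 6
      exact this.congr_deriv (by norm_num [Pi.pow_apply])
    exact hnum.div hden (pow_ne_zero 6 hBne)
  -- w2F derivative
  have hw2 : HasDerivAt w2F
      (((3 * (3 * (Real.sinh (2 * θ) - 2 * θ) ^ 2 * (2 * Real.cosh (2 * θ) - 2)) * Real.cosh θ
          + 3 * (Real.sinh (2 * θ) - 2 * θ) ^ 3 * Real.sinh θ) * (2 * (Real.cosh (2 * θ) - 1) ^ 4 * Real.sinh θ)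
        - 3 * (Real.sinh (2 * θ) - 2 * θ) ^ 3 * Real.cosh θ *
            (2 * (4 * (Real.cosh (2 * θ) - 1) ^ 3 * (2 * Real.sinh (2 * θ))) * Real.sinh θ
              + 2 * (Real.cosh (2 * θ) - 1) ^ 4 * Real.cosh θ))
        / (2 * (Real.cosh (2 * θ) - 1) ^ 4 * Real.sinh θ) ^ 2) θ := by
    have hnum : HasDerivAt (fun x => 3 * (Real.sinh (2 * x) - 2 * x) ^ 3 * Real.cosh x)
        (3 * (3 * (Real.sinh (2 * θ) - 2 * θ) ^ 2 * (2 * Real.cosh (2 * θ) - 2)) * Real.cosh θ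
          + 3 * (Real.sinh (2 * θ) - 2 * θ) ^ 3 * Real.sinh θ) θ := by
      have := ((hA.pow 3).const_mul 3).mul (Real.hasDerivAt_cosh θ)
      exact this.congr_deriv (by norm_num [Pi.pow_apply])
    have hden : HasDerivAt (fun x => 2 * (Real.cosh (2 * x) - 1) ^ 4 * Real.sinh x)
        (2 * (4 * (Real.cosh (2 * θ) - 1) ^ 3 * (2 * Real.sinh (2 * θ))) * Real.sinh θ
          + 2 * (Real.cosh (2 * θ) - 1) ^ 4 * Real.cosh θ) θ := by
      have := ((hB.pow 4).const_mul 2).mul (Real.hasDerivAt_sinh θ)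
      exact this.congr_deriv (by norm_num [Pi.pow_apply])
    have hdne : 2 * (Real.cosh (2 * θ) - 1) ^ 4 * Real.sinh θ ≠ 0 := by positivity
    exact hnum.div hden hdne
  constructor
  · rw [hz4.deriv]
    unfold T z2F w0F z4F w2F
    rw [hC2, hS2]
    have hB' : 2 * Real.sinh θ ^ 2 + 1 - 1 = 2 * Real.sinh θ ^ 2 := by ring
    rw [hB']
    field_simp
    linear_combination ((720 : ℝ) *
      (θ - Real.sinh θ * Real.cosh θ) ^ 5) * hc2
  · rw [hw2.deriv]
    unfold T z2F w0F z4F w2F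
    rw [hC2, hS2]
    have hB' : 2 * Real.sinh θ ^ 2 + 1 - 1 = 2 * Real.sinh θ ^ 2 := by ring
    rw [hB']
    field_simp
    linear_combination ((-2880 : ℝ) *
      (θ - Real.sinh θ * Real.cosh θ) ^ 4) * hc2
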